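/- On set systems, twist and loop complement at a single point e generate a group isomorphic to S_3; in particular *e and +e are involutions and *e+e*e = +e*e+e. -/

import Mathlib

/-- The twist `M * e` of a set system, acting on its family of feasible sets:
each feasible set is replaced by its symmetric difference with `{e}`. -/
def twistOp {α : Type*} [DecidableEq α] (e : α) : Function.End (Finset (Finset α)) :=
  fun F => F.image fun A => symmDiff A {e}

/-- The loop complement `M + e` of a set system, acting on its family of
feasible sets: `F ↦ F Δ {A ∪ {e} : A ∈ F, e ∉ A}`. -/
def loopCompOp {α : Type*} [DecidableEq α] (e : α) : Function.End (Finset (Finset α)) :=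
  fun F => symmDiff F ((F.filter fun A => e ∉ A).image fun A => insert e A)

section Aux

variable {α : Type*} [DecidableEq α] (e : α)

lemma sd_mem {B : Finset α} (h : e ∈ B) : symmDiff B {e} = B.erase e := by
  ext x; simp [Finset.mem_symmDiff, Finset.mem_erase]
  constructor
  · rintro (⟨h1,h2⟩|⟨rfl,h2⟩); exact ⟨h2,h1⟩; exact absurd h h2
  · rintro ⟨h1,h2⟩; exact Or.inl ⟨h2,h1⟩

lemma sd_not_mem {B : Finset α} (h : e ∉ B) : symmDiff B {e} = insert e B := by
  ext x; simp [Finset.mem_symmDiff, Finset.mem_insert]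
  constructor
  · rintro (⟨h1,h2⟩|⟨rfl,-⟩); exact Or.inr h1; exact Or.inl rfl
  · rintro (rfl|h1); exact Or.inr ⟨rfl, h⟩; exact Or.inl ⟨h1, fun hx => h (hx ▸ h1)⟩

lemma sd_sd (B : Finset α) : symmDiff (symmDiff B {e}) {e} = B :=
  symmDiff_symmDiff_cancel_right (a := ({e} : Finset α)) (b := B)

lemma mem_twist (F : Finset (Finset α)) (B : Finset α) :
    B ∈ twistOp e F ↔ symmDiff B {e} ∈ F := by
  simp only [twistOp, Finset.mem_image]
  constructor
  · rintro ⟨A, hA, rfl⟩; rwa [sd_sd]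
  · intro h; exact ⟨_, h, sd_sd e B⟩

lemma mem_loop (F : Finset (Finset α)) (B : Finset α) :
    B ∈ loopCompOp e F ↔
      (B ∈ F ∧ ¬(e ∈ B ∧ B.erase e ∈ F)) ∨ ((e ∈ B ∧ B.erase e ∈ F) ∧ B ∉ F) := by
  have himg : B ∈ (F.filter fun A => e ∉ A).image (fun A => insert e A) ↔
      e ∈ B ∧ B.erase e ∈ F := by
    simp only [Finset.mem_image, Finset.mem_filter]
    constructor
    · rintro ⟨A, ⟨hA, heA⟩, rfl⟩
      exact ⟨Finset.mem_insert_self _ _, by rwa [Finset.erase_insert heA]⟩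
    · rintro ⟨heB, hBF⟩
      exact ⟨B.erase e, ⟨hBF, Finset.notMem_erase _ _⟩, Finset.insert_erase heB⟩
  rw [loopCompOp]
  simp only [Finset.mem_symmDiff, himg]

lemma twist_twist (F : Finset (Finset α)) : twistOp e (twistOp e F) = F := by
  ext B; rw [mem_twist, mem_twist, sd_sd]

lemma loop_loop (F : Finset (Finset α)) : loopCompOp e (loopCompOp e F) = F := by
  ext B
  by_cases he : e ∈ B
  · simp only [mem_loop, Finset.notMem_erase, false_and, not_false_iff, and_true,
      not_and, he, true_and]
    try tauto
  · simp only [mem_loop, he, false_and, not_false_iff, and_true, false_or, and_false,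
      not_false_eq_true, or_false, true_and, not_and]
    try tauto

lemma braid (F : Finset (Finset α)) :
    twistOp e (loopCompOp e (twistOp e F)) = loopCompOp e (twistOp e (loopCompOp e F)) := by
  ext B
  by_cases he : e ∈ B
  · have h1 : e ∉ B.erase e := Finset.notMem_erase _ _
    simp only [mem_twist, mem_loop, sd_mem e he, sd_not_mem e h1, Finset.erase_insert h1,
      Finset.mem_insert_self, Finset.notMem_erase, Finset.insert_erase he, true_and, false_and,
      not_false_iff, and_true, he]
    try tauto
  · have h2 : e ∈ insert e B := Finset.mem_insert_self _ _
    simp only [mem_twist, mem_loop, sd_not_mem e he, sd_mem e h2, Finset.erase_insert he,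
      Finset.mem_insert_self, Finset.notMem_erase, he, true_and, false_and, not_false_iff,
      and_true]
    try tauto

/-- the three reference families of feasible sets -/
def Xf (e : α) : Fin 3 → Finset (Finset α) := ![{∅}, {{e}}, {∅, {e}}]

lemma hne0 : (∅ : Finset α) ≠ {e} := (Finset.singleton_ne_empty e).symm

lemma notmem1 : (∅ : Finset α) ∉ ({{e}} : Finset (Finset α)) := by simp [hne0]

lemma card2 : ({∅, {e}} : Finset (Finset α)).card = 2 := by
  rw [Finset.card_insert_of_notMem (notmem1 e), Finset.card_singleton]

lemma ne01 : ({∅} : Finset (Finset α)) ≠ {{e}} := by simpa using hne0 e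

lemma ne02 : ({∅} : Finset (Finset α)) ≠ {∅, {e}} := fun h => by
  have := congrArg Finset.card h
  rw [Finset.card_singleton, card2] at this
  exact absurd this (by decide)

lemma ne12 : ({{e}} : Finset (Finset α)) ≠ {∅, {e}} := fun h => by
  have := congrArg Finset.card h
  rw [Finset.card_singleton, card2] at this
  exact absurd this (by decide)

lemma Xinj : Function.Injective (Xf e) := by
  intro i j hij
  fin_cases i <;> fin_cases j <;> simp only [Xf, Matrix.cons_val_zero, Matrix.cons_val_one,
    Matrix.head_cons, Matrix.cons_val_two, Matrix.tail_cons] at hij <;>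
    first
      | rfl
      | exact absurd hij (ne01 e) | exact absurd hij (ne02 e) | exact absurd hij (ne12 e)
      | exact absurd hij.symm (ne01 e) | exact absurd hij.symm (ne02 e)
      | exact absurd hij.symm (ne12 e)

lemma tX0 : twistOp e {∅} = {{e}} := by
  rw [twistOp]
  simp only [Finset.image_singleton]
  rw [sd_not_mem e (Finset.notMem_empty e), insert_empty_eq]

lemma tX1 : twistOp e {{e}} = {∅} := by
  rw [twistOp]; simp only [Finset.image_singleton, symmDiff_self]; rfl

lemma tX2 : twistOp e {∅, {e}} = {∅, {e}} := by
  rw [twistOp, show ({∅, {e}} : Finset (Finset α)) = insert ∅ {{e}} from rfl,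
    Finset.image_insert, Finset.image_singleton,
    sd_not_mem e (Finset.notMem_empty e), insert_empty_eq, symmDiff_self]
  rw [show (⊥ : Finset α) = ∅ from rfl]
  exact Finset.pair_comm _ _

lemma lX0 : loopCompOp e {∅} = {∅, {e}} := by
  rw [loopCompOp, Finset.filter_singleton]
  simp only [Finset.notMem_empty, not_false_iff, if_true, Finset.image_singleton,
    insert_empty_eq]
  rw [sd_not_mem (e := ({e} : Finset α)) (by simp [hne0 e])]
  exact Finset.pair_comm _ _

lemma lX1 : loopCompOp e {{e}} = {{e}} := by
  rw [loopCompOp, Finset.filter_singleton]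
  simp [Finset.mem_singleton_self]

lemma lX2 : loopCompOp e {∅, {e}} = {∅} := by
  rw [loopCompOp]
  have hfil : Finset.filter (fun A => e ∉ A) ({∅, {e}} : Finset (Finset α)) = {∅} := by
    ext A
    simp only [Finset.mem_filter, Finset.mem_insert, Finset.mem_singleton]
    constructor
    · rintro ⟨rfl | rfl, h2⟩
      · rfl
      · exact absurd (Finset.mem_singleton_self e) h2
    · rintro rfl; exact ⟨Or.inl rfl, Finset.notMem_empty e⟩
  rw [hfil, Finset.image_singleton, insert_empty_eq,
    sd_mem (e := ({e} : Finset α)) (by simp),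
    show ({∅, {e}} : Finset (Finset α)) = insert ∅ {{e}} from rfl,
    Finset.erase_insert_of_ne (hne0 e), Finset.erase_singleton]
  rfl

lemma tX : ∀ i, twistOp e (Xf e i) = Xf e (Equiv.swap 0 1 i) := by
  intro i
  fin_cases i
  · show twistOp e (Xf e 0) = Xf e ((Equiv.swap 0 1) 0)
    rw [show (Equiv.swap (0 : Fin 3) 1) 0 = 1 from by decide]; exact tX0 e
  · show twistOp e (Xf e 1) = Xf e ((Equiv.swap 0 1) 1)
    rw [show (Equiv.swap (0 : Fin 3) 1) 1 = 0 from by decide]; exact tX1 e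
  · show twistOp e (Xf e 2) = Xf e ((Equiv.swap 0 1) 2)
    rw [show (Equiv.swap (0 : Fin 3) 1) 2 = 2 from by decide]; exact tX2 e

lemma lX : ∀ i, loopCompOp e (Xf e i) = Xf e (Equiv.swap 0 2 i) := by
  intro i
  fin_cases i
  · show loopCompOp e (Xf e 0) = Xf e ((Equiv.swap 0 2) 0)
    rw [show (Equiv.swap (0 : Fin 3) 2) 0 = 2 from by decide]; exact lX0 e
  · show loopCompOp e (Xf e 1) = Xf e ((Equiv.swap 0 2) 1)
    rw [show (Equiv.swap (0 : Fin 3) 2) 1 = 1 from by decide]; exact lX1 e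
  · show loopCompOp e (Xf e 2) = Xf e ((Equiv.swap 0 2) 2)
    rw [show (Equiv.swap (0 : Fin 3) 2) 2 = 0 from by decide]; exact lX2 e

lemma hXf0 : Xf e 0 = {∅} := rfl
lemma hXf1 : Xf e 1 = {{e}} := rfl
lemma hXf2 : Xf e 2 = {∅, {e}} := rfl

end Aux

/-- On set systems, the twist `*e` and loop complement `+e` at a point `e` are
involutions satisfying `*e+e*e = +e*e+e`, and they generate a group isomorphic
to the symmetric group `S₃`. -/
theorem twist_loopComp_generate_S3 {α : Type*} [DecidableEq α] [Nonempty α] (e : α) :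
    (∀ F : Finset (Finset α), twistOp e (twistOp e F) = F) ∧
    (∀ F : Finset (Finset α), loopCompOp e (loopCompOp e F) = F) ∧
    (∀ F : Finset (Finset α),
      twistOp e (loopCompOp e (twistOp e F)) = loopCompOp e (twistOp e (loopCompOp e F))) ∧
    Nonempty
      ((Submonoid.closure {twistOp e, loopCompOp e} : Submonoid (Function.End (Finset (Finset α))))
        ≃* Equiv.Perm (Fin 3)) := by
  refine ⟨twist_twist e, loop_loop e, braid e, ?_⟩
  have ht : twistOp e * twistOp e = 1 := funext (twist_twist e)
  have hl : loopCompOp e * loopCompOp e = 1 := funext (loop_loop e)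
  have hb : twistOp e * loopCompOp e * twistOp e = loopCompOp e * twistOp e * loopCompOp e :=
    funext (braid e)
  have htm : twistOp e ∈ Submonoid.closure {twistOp e, loopCompOp e} :=
    Submonoid.subset_closure (Set.mem_insert _ _)
  have hlm : loopCompOp e ∈ Submonoid.closure {twistOp e, loopCompOp e} :=
    Submonoid.subset_closure (Set.mem_insert_of_mem _ rfl)
  have hspec : ∀ f ∈ Submonoid.closure {twistOp e, loopCompOp e},
      ∃ σ : Equiv.Perm (Fin 3), ∀ i, f (Xf e i) = Xf e (σ i) := by
    intro f hf
    induction hf using Submonoid.closure_induction with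
    | mem x hx =>
      simp only [Set.mem_insert_iff, Set.mem_singleton_iff] at hx
      rcases hx with rfl | rfl
      · exact ⟨Equiv.swap 0 1, tX e⟩
      · exact ⟨Equiv.swap 0 2, lX e⟩
    | one => exact ⟨1, fun i => rfl⟩
    | mul x y hx hy px py =>
      obtain ⟨σ, hσ⟩ := px
      obtain ⟨τ, hτ⟩ := py
      refine ⟨σ * τ, fun i => ?_⟩
      show x (y (Xf e i)) = _
      rw [hτ i, hσ (τ i)]
      rfl
  have uniq : ∀ (f : Function.End (Finset (Finset α))) (σ τ : Equiv.Perm (Fin 3)),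
      (∀ i, f (Xf e i) = Xf e (σ i)) → (∀ i, f (Xf e i) = Xf e (τ i)) → σ = τ := by
    intro f σ τ h1 h2
    apply Equiv.ext
    intro i
    exact Xinj e (by rw [← h1 i, h2 i])
  choose! σof hσof using hspec
  let φ : (Submonoid.closure {twistOp e, loopCompOp e} :
      Submonoid (Function.End (Finset (Finset α)))) →* Equiv.Perm (Fin 3) :=
    { toFun := fun x => σof x
      map_one' := uniq 1 (σof 1) 1 (hσof 1 (one_mem _)) (fun i => rfl)
      map_mul' := fun x y =>
        uniq (x * y : _) (σof _) (σof x * σof y) (hσof _ (mul_mem x.2 y.2))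
          (fun i => by
            show (x : Function.End _) ((y : Function.End _) (Xf e i)) = _
            rw [hσof y y.2 i, hσof x x.2 (σof (y : Function.End _) i)]
            rfl) }
  have hφ : ∀ x : (Submonoid.closure {twistOp e, loopCompOp e} :
      Submonoid (Function.End (Finset (Finset α)))),
      ∀ i, (x : Function.End _) (Xf e i) = Xf e (φ x i) := fun x => hσof x x.2
  have φt : φ ⟨twistOp e, htm⟩ = Equiv.swap 0 1 :=
    uniq (twistOp e) _ _ (hφ ⟨twistOp e, htm⟩) (tX e)
  have φl : φ ⟨loopCompOp e, hlm⟩ = Equiv.swap 0 2 :=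
    uniq (loopCompOp e) _ _ (hφ ⟨loopCompOp e, hlm⟩) (lX e)
  -- every element of the closure is one of the six words
  have hS : ∀ f ∈ Submonoid.closure {twistOp e, loopCompOp e},
      f = 1 ∨ f = twistOp e ∨ f = loopCompOp e ∨ f = twistOp e * loopCompOp e ∨
      f = loopCompOp e * twistOp e ∨ f = twistOp e * loopCompOp e * twistOp e := by
    intro f hf
    induction hf using Submonoid.closure_induction_left with
    | one => exact Or.inl rfl
    | mul_left x hx y hy ih =>
      simp only [Set.mem_insert_iff, Set.mem_singleton_iff] at hx
      rcases hx with rfl | rfl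
      · rcases ih with rfl | rfl | rfl | rfl | rfl | rfl
        · exact Or.inr (Or.inl (mul_one _))
        · exact Or.inl ht
        · exact Or.inr (Or.inr (Or.inr (Or.inl rfl)))
        · refine Or.inr (Or.inr (Or.inl ?_))
          rw [← mul_assoc, ht, one_mul]
        · exact Or.inr (Or.inr (Or.inr (Or.inr (Or.inr (mul_assoc _ _ _).symm))))
        · refine Or.inr (Or.inr (Or.inr (Or.inr (Or.inl ?_))))
          rw [← mul_assoc, ← mul_assoc, ht, one_mul]
      · rcases ih with rfl | rfl | rfl | rfl | rfl | rfl
        · exact Or.inr (Or.inr (Or.inl (mul_one _)))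
        · exact Or.inr (Or.inr (Or.inr (Or.inr (Or.inl rfl))))
        · exact Or.inl hl
        · refine Or.inr (Or.inr (Or.inr (Or.inr (Or.inr ?_))))
          rw [← mul_assoc, ← hb]
        · refine Or.inr (Or.inl ?_)
          rw [← mul_assoc, hl, one_mul]
        · refine Or.inr (Or.inr (Or.inr (Or.inl ?_)))
          simp only [← mul_assoc]
          rw [← hb, mul_assoc (twistOp e * loopCompOp e), ht, mul_one]
  -- trivial kernel
  have hker : ∀ x : (Submonoid.closure {twistOp e, loopCompOp e} :
      Submonoid (Function.End (Finset (Finset α)))),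
      φ x = 1 → (x : Function.End (Finset (Finset α))) = 1 := by
    intro x hx1
    have hfix : ∀ i, (x : Function.End (Finset (Finset α))) (Xf e i) = Xf e i := fun i => by
      rw [hφ x i, hx1]; rfl
    rcases hS (x : Function.End (Finset (Finset α))) x.2 with h | h | h | h | h | h
    · exact h
    · exfalso
      have h0 := hfix 0
      rw [h, hXf0, tX0 e] at h0
      exact ne01 e h0.symm
    · exfalso
      have h0 := hfix 0
      rw [h, hXf0, lX0 e] at h0
      exact ne02 e h0.symm
    · exfalso
      have h0 := hfix 0
      rw [h, hXf0] at h0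
      rw [show (twistOp e * loopCompOp e) ({∅} : Finset (Finset α)) =
        twistOp e (loopCompOp e {∅}) from rfl, lX0 e, tX2 e] at h0
      exact ne02 e h0.symm
    · exfalso
      have h0 := hfix 0
      rw [h, hXf0] at h0
      rw [show (loopCompOp e * twistOp e) ({∅} : Finset (Finset α)) =
        loopCompOp e (twistOp e {∅}) from rfl, tX0 e, lX1 e] at h0
      exact ne01 e h0.symm
    · exfalso
      have h0 := hfix 1
      rw [h, hXf1] at h0
      rw [show (twistOp e * loopCompOp e * twistOp e) ({{e}} : Finset (Finset α)) =
        twistOp e (loopCompOp e (twistOp e {{e}})) from rfl, tX1 e, lX0 e, tX2 e] at h0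
      exact ne12 e h0.symm
  -- inverses
  have hinv : ∀ f ∈ Submonoid.closure {twistOp e, loopCompOp e},
      ∃ g ∈ Submonoid.closure {twistOp e, loopCompOp e}, f * g = 1 ∧ g * f = 1 := by
    intro f hf
    induction hf using Submonoid.closure_induction with
    | mem x hx =>
      simp only [Set.mem_insert_iff, Set.mem_singleton_iff] at hx
      rcases hx with rfl | rfl
      · exact ⟨twistOp e, htm, ht, ht⟩
      · exact ⟨loopCompOp e, hlm, hl, hl⟩
    | one => exact ⟨1, one_mem _, one_mul 1, one_mul 1⟩
    | mul x y hx hy ihx ihy =>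
      obtain ⟨gx, hgxm, hx1, hx2⟩ := ihx
      obtain ⟨gy, hgym, hy1, hy2⟩ := ihy
      refine ⟨gy * gx, mul_mem hgym hgxm, ?_, ?_⟩
      · rw [mul_assoc, ← mul_assoc y, hy1, one_mul, hx1]
      · rw [mul_assoc, ← mul_assoc gx, hx2, one_mul, hy2]
  have hinj : Function.Injective φ := by
    intro x y hxy
    obtain ⟨g, hgm, hg1, hg2⟩ := hinv (y : Function.End _) y.2
    have h1 : φ (x * ⟨g, hgm⟩) = 1 := by
      rw [map_mul, hxy, ← map_mul]
      rw [show (y * ⟨g, hgm⟩ :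
        (Submonoid.closure {twistOp e, loopCompOp e} :
          Submonoid (Function.End (Finset (Finset α))))) = 1 from Subtype.ext hg1, map_one]
    have h2 := hker _ h1
    apply Subtype.ext
    calc (x : Function.End (Finset (Finset α)))
        = ((x : Function.End _) * g) * (y : Function.End _) := by
          rw [mul_assoc, hg2, mul_one]
      _ = (y : Function.End _) := by
          rw [show (x : Function.End (Finset (Finset α))) * g = 1 from h2, one_mul]
  have hsurj : Function.Surjective φ := by
    have hall : ∀ σ : Equiv.Perm (Fin 3), σ = 1 ∨ σ = Equiv.swap 0 1 ∨ σ = Equiv.swap 0 2 ∨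
        σ = Equiv.swap 0 1 * Equiv.swap 0 2 ∨ σ = Equiv.swap 0 2 * Equiv.swap 0 1 ∨
        σ = Equiv.swap 0 1 * (Equiv.swap 0 2 * Equiv.swap 0 1) := by decide
    intro σ
    rcases hall σ with rfl | rfl | rfl | rfl | rfl | rfl
    · exact ⟨1, map_one φ⟩
    · exact ⟨⟨_, htm⟩, φt⟩
    · exact ⟨⟨_, hlm⟩, φl⟩
    · exact ⟨⟨_, htm⟩ * ⟨_, hlm⟩, by rw [map_mul, φt, φl]⟩
    · exact ⟨⟨_, hlm⟩ * ⟨_, htm⟩, by rw [map_mul, φt, φl]⟩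
    · exact ⟨⟨_, htm⟩ * (⟨_, hlm⟩ * ⟨_, htm⟩), by rw [map_mul, map_mul, φt, φl]⟩
  exact ⟨MulEquiv.ofBijective φ ⟨hinj, hsurj⟩⟩
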